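/- arXiv:1502.03070 — 4 statements merged into one kernel-verified Lean document; each statement's English description precedes it below -/
import Mathlib

section
/- Let A be a normed ℝ-algebra (associative, unital) and let P : ℝ → A⟦X⟧ satisfy constantCoeff (P t) = 0 for all t. Suppose L₁, L₂ : ℝ → A⟦X⟧ both satisfy the formal Lax equation with coefficient P, and L₁ 0 = L₂ 0. Then L₁ = L₂. -/
/-- A path `L : ℝ → A⟦X⟧` satisfies the formal Lax equation with coefficient
`P : ℝ → A⟦X⟧` if each coefficient function `t ↦ coeff n (L t)` has derivative
`coeff n (P t * L t - L t * P t)` at every `t`. -/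
def FormalLaxEq {A : Type*} [NormedRing A] [NormedAlgebra ℝ A]
    (P L : ℝ → PowerSeries A) : Prop :=
  ∀ (n : ℕ) (t : ℝ),
    HasDerivAt (fun s => PowerSeries.coeff n (L s))
      (PowerSeries.coeff n (P t * L t - L t * P t)) t

/-- Uniqueness for the formal Lax equation: if `P` has zero constant coefficient,
two solutions with the same initial value agree. -/
theorem stmt_5 (A : Type*) [NormedRing A] [NormedAlgebra ℝ A]
    (P : ℝ → PowerSeries A) (hP : ∀ t, PowerSeries.constantCoeff (P t) = 0)
    (L₁ L₂ : ℝ → PowerSeries A)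
    (h₁ : FormalLaxEq P L₁) (h₂ : FormalLaxEq P L₂)
    (h0 : L₁ 0 = L₂ 0) :
    L₁ = L₂ := by
  have key : ∀ n : ℕ, ∀ t : ℝ, PowerSeries.coeff n (L₁ t) = PowerSeries.coeff n (L₂ t) := by
    intro n
    induction n using Nat.strong_induction_on with
    | _ n ih =>
      -- the derivative expressions coincide thanks to ih
      have hder : ∀ t, PowerSeries.coeff n (P t * L₁ t - L₁ t * P t)
          = PowerSeries.coeff n (P t * L₂ t - L₂ t * P t) := by
        intro t
        simp only [map_sub, PowerSeries.coeff_mul]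
        congr 1
        · refine Finset.sum_congr rfl ?_
          rintro ⟨i, j⟩ hij
          simp only [Finset.HasAntidiagonal.mem_antidiagonal] at hij
          rcases Nat.eq_zero_or_pos i with hi | hi
          · subst hi
            have : PowerSeries.coeff 0 (P t) = 0 := by
              simpa [PowerSeries.coeff_zero_eq_constantCoeff] using hP t
            simp [this]
          · have hj : j < n := by omega
            rw [ih j hj]
        · refine Finset.sum_congr rfl ?_
          rintro ⟨i, j⟩ hij
          simp only [Finset.HasAntidiagonal.mem_antidiagonal] at hij
          rcases Nat.eq_zero_or_pos j with hj | hj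
          · subst hj
            have : PowerSeries.coeff 0 (P t) = 0 := by
              simpa [PowerSeries.coeff_zero_eq_constantCoeff] using hP t
            simp [this]
          · have hi : i < n := by omega
            rw [ih i hi]
      set g : ℝ → A := fun t => PowerSeries.coeff n (L₁ t) - PowerSeries.coeff n (L₂ t)
        with hg
      have hg' : ∀ t, HasDerivAt g 0 t := by
        intro t
        have := (h₁ n t).sub (h₂ n t)
        rw [hder t] at this
        rw [sub_self] at this
        exact this
      have hdiff : Differentiable ℝ g := fun t => (hg' t).differentiableAt
      have hderiv0 : ∀ t, deriv g t = 0 := fun t => (hg' t).deriv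
      intro t
      have : g t = g 0 := is_const_of_deriv_eq_zero hdiff hderiv0 t 0
      have h00 : g 0 = 0 := by simp [hg, h0]
      rw [h00] at this
      have := sub_eq_zero.mp this
      exact this
  funext t
  exact PowerSeries.ext fun n => key n t
end

section
/- Let A be a normed ℝ-algebra (associative, unital), let P : ℝ → A⟦X⟧ satisfy constantCoeff (P t) = 0 for all t, and let U : ℝ → A⟦X⟧ be such that constantCoeff (U t) = 1 for all t and for every n ∈ ℕ and t ∈ ℝ the function t ↦ coeff n (U t) has derivative coeff n (P t * U t) at t. Then each U t is a unit of A⟦X⟧, and for every L₀ ∈ A⟦X⟧ the path L t := U t * L₀ * (U t)⁻¹ satisfies the formal Lax equation with coefficient P and has L 0 = U 0 * L₀ * (U 0)⁻¹. -/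
open PowerSeries Finset

/-- Coefficientwise product rule for paths of power series. -/
lemma coeff_mul_hasDerivAt {A : Type*} [NormedRing A] [NormedAlgebra ℝ A]
    {f g : ℝ → PowerSeries A} {f' g' : PowerSeries A} {t : ℝ}
    (hf : ∀ n, HasDerivAt (fun s => PowerSeries.coeff n (f s))
      (PowerSeries.coeff n f') t)
    (hg : ∀ n, HasDerivAt (fun s => PowerSeries.coeff n (g s))
      (PowerSeries.coeff n g') t) (n : ℕ) :
    HasDerivAt (fun s => PowerSeries.coeff n (f s * g s))
      (PowerSeries.coeff n (f' * g t + f t * g')) t := by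
  have h : ∀ s, PowerSeries.coeff n (f s * g s)
      = ∑ p ∈ antidiagonal n, PowerSeries.coeff p.1 (f s) * PowerSeries.coeff p.2 (g s) :=
    fun s => PowerSeries.coeff_mul n _ _
  rw [show (fun s => PowerSeries.coeff n (f s * g s))
      = fun s => ∑ p ∈ antidiagonal n,
        PowerSeries.coeff p.1 (f s) * PowerSeries.coeff p.2 (g s) from funext h]
  have := HasDerivAt.sum (fun p (_ : p ∈ antidiagonal n) => (hf p.1).mul (hg p.2))
  convert this using 1
  case e'_4 => rfl
  case e'_8 => ext s; simp [Finset.sum_apply]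
  rw [map_add, PowerSeries.coeff_mul, PowerSeries.coeff_mul, ← Finset.sum_add_distrib]

/-- If `U` solves `∂ₜU = P U` coefficientwise, with `constantCoeff (U t) = 1` and
`constantCoeff (P t) = 0`, then each `U t` is a unit of `A⟦X⟧` and conjugation
`t ↦ U t * L₀ * (U t)⁻¹` of any `L₀` solves the formal Lax equation with coefficient `P`. -/
theorem stmt_7 (A : Type*) [NormedRing A] [NormedAlgebra ℝ A]
    (P : ℝ → PowerSeries A) (hP0 : ∀ t, PowerSeries.constantCoeff (P t) = 0)
    (U : ℝ → PowerSeries A)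
    (hU1 : ∀ t, PowerSeries.constantCoeff (U t) = 1)
    (hU : ∀ (n : ℕ) (t : ℝ),
      HasDerivAt (fun s => PowerSeries.coeff n (U s))
        (PowerSeries.coeff n (P t * U t)) t) :
    (∀ t, IsUnit (U t)) ∧
    (∀ L₀ : PowerSeries A,
      FormalLaxEq P (fun t => U t * L₀ * Ring.inverse (U t)) ∧
      (fun t => U t * L₀ * Ring.inverse (U t)) 0 = U 0 * L₀ * Ring.inverse (U 0)) := by
  have hunit : ∀ t, IsUnit (U t) := fun t =>
    PowerSeries.isUnit_iff_constantCoeff.mpr (by rw [hU1 t]; exact isUnit_one)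
  set V : ℝ → PowerSeries A := fun t => Ring.inverse (U t) with hV
  have hVU : ∀ t, V t * U t = 1 := fun t => Ring.inverse_mul_cancel _ (hunit t)
  have hcoeff0U : ∀ t, PowerSeries.coeff 0 (U t) = 1 := fun t => by
    rw [PowerSeries.coeff_zero_eq_constantCoeff]; exact hU1 t
  -- recursion for the coefficients of the inverse
  have hrec : ∀ (n : ℕ) (s : ℝ), PowerSeries.coeff n (V s)
      = (if n = 0 then (1 : A) else 0)
        - ∑ i ∈ range n, PowerSeries.coeff i (V s) * PowerSeries.coeff (n - i) (U s) := by
    intro n s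
    have h1 : PowerSeries.coeff n ((V s) * (U s)) = (if n = 0 then (1 : A) else 0) := by
      rw [hVU s, PowerSeries.coeff_one]
    rw [PowerSeries.coeff_mul, Finset.Nat.sum_antidiagonal_eq_sum_range_succ_mk,
      Finset.sum_range_succ, Nat.sub_self, hcoeff0U s, mul_one] at h1
    dsimp only at h1
    rw [← h1]; abel
  -- derivative of the coefficients of the inverse
  have hVderiv : ∀ (n : ℕ), ∀ (t : ℝ),
      HasDerivAt (fun s => PowerSeries.coeff n (V s))
        (PowerSeries.coeff n (-(V t * P t))) t := by
    intro n
    induction n using Nat.strong_induction_on with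
    | _ n IH =>
      intro t
      rw [show (fun s => PowerSeries.coeff n (V s))
          = fun s => (if n = 0 then (1 : A) else 0)
            - ∑ i ∈ range n, PowerSeries.coeff i (V s) * PowerSeries.coeff (n - i) (U s)
          from funext (hrec n)]
      have hsum := HasDerivAt.sum (fun i (hi : i ∈ range n) =>
        (IH i (Finset.mem_range.mp hi) t).mul (hU (n - i) t))
      have := hsum.const_sub (if n = 0 then (1 : A) else 0)
      convert this using 1
      case e'_4 => rfl
      case e'_8 => ext s; simp [Finset.sum_apply]
      -- algebraic identity for the derivative value
      set W : PowerSeries A := -(V t * P t) with hW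
      have h2 : PowerSeries.coeff n (W * U t)
          = ∑ i ∈ range n, PowerSeries.coeff i W * PowerSeries.coeff (n - i) (U t)
            + PowerSeries.coeff n W := by
        rw [PowerSeries.coeff_mul, Finset.Nat.sum_antidiagonal_eq_sum_range_succ_mk,
          Finset.sum_range_succ, Nat.sub_self, hcoeff0U t, mul_one]
      have h3 : PowerSeries.coeff n (V t * (P t * U t))
          = ∑ i ∈ range n, PowerSeries.coeff i (V t)
              * PowerSeries.coeff (n - i) (P t * U t) := by
        rw [PowerSeries.coeff_mul, Finset.Nat.sum_antidiagonal_eq_sum_range_succ_mk,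
          Finset.sum_range_succ, Nat.sub_self]
        have : PowerSeries.coeff 0 (P t * U t) = 0 := by
          rw [PowerSeries.coeff_zero_eq_constantCoeff, map_mul, hP0 t, zero_mul]
        rw [this, mul_zero, add_zero]
      have hWU : PowerSeries.coeff n (W * U t)
          = -PowerSeries.coeff n (V t * (P t * U t)) := by
        rw [show W * U t = -(V t * (P t * U t)) by rw [hW]; noncomm_ring, map_neg]
      have hsa : ∑ i ∈ range n, PowerSeries.coeff i W * PowerSeries.coeff (n - i) (U t)
          = -PowerSeries.coeff n (V t * (P t * U t)) - PowerSeries.coeff n W := by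
        rw [← hWU]; rw [h2]; abel
      rw [Finset.sum_add_distrib, hsa, ← h3]
      abel
  refine ⟨hunit, fun L₀ => ⟨?_, rfl⟩⟩
  intro n t
  have hL0 : ∀ m, HasDerivAt (fun _ : ℝ => PowerSeries.coeff m L₀)
      (PowerSeries.coeff m (0 : PowerSeries A)) t := by
    intro m; rw [map_zero]; exact hasDerivAt_const t _
  have h1 := coeff_mul_hasDerivAt (f := fun s => U s) (g := fun _ => L₀)
    (f' := P t * U t) (g' := 0) (fun m => hU m t) hL0
  have h2 := coeff_mul_hasDerivAt (f := fun s => U s * L₀) (g := V)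
    (f' := P t * U t * L₀ + U t * 0) (g' := -(V t * P t)) h1 (fun m => hVderiv m t) n
  convert h2 using 2
  have hLt : P t * (U t * L₀ * V t) - U t * L₀ * V t * P t
      = (P t * U t * L₀ + U t * 0) * V t + U t * L₀ * -(V t * P t) := by
    noncomm_ring
  exact hLt
end

section
/- Let A be a complete normed ℝ-algebra (associative, unital), P : ℝ → A, and let g : ℝ → Aˣ be such that for every t, HasDerivAt (fun s => ↑(g s)) (P t * ↑(g t)) t. Let S₀ : A →L[ℝ] A be any continuous linear operator, and define S : ℝ → (A →L[ℝ] A) by (S t) x = ↑(g t) * S₀(↑((g t)⁻¹) * x * ↑(g t)) * ↑((g t)⁻¹). Then for every x ∈ A and every t, HasDerivAt (fun s => (S s) x) ((ad (P t)) ((S t) x) − (S t) ((ad (P t)) x)) t; that is, S solves the symmetry equation ∂_t S = [ad P, S]. -/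
/-- The adjoint action `ad Q : x ↦ Q * x - x * Q` as a continuous linear map. -/
noncomputable def adOp {A : Type*} [NormedRing A] [NormedAlgebra ℝ A] (Q : A) :
    A →L[ℝ] A :=
  ContinuousLinearMap.mul ℝ A Q - (ContinuousLinearMap.mul ℝ A).flip Q

/-- Conjugation by a unit, `x ↦ g * x * g⁻¹`, as a continuous linear map. -/
noncomputable def conjOp {A : Type*} [NormedRing A] [NormedAlgebra ℝ A] (g : Aˣ) :
    A →L[ℝ] A :=
  (ContinuousLinearMap.mul ℝ A (g : A)).comp
    ((ContinuousLinearMap.mul ℝ A).flip ((g⁻¹ : Aˣ) : A))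

/-- If `g : ℝ → Aˣ` solves `g' = P * g` and `S₀` is any continuous linear operator,
then `S t : x ↦ g t * S₀((g t)⁻¹ * x * g t) * (g t)⁻¹` solves the symmetry equation
`∂ₜ S = [ad P, S]` pointwise: for every `x` and `t`, `s ↦ (S s) x` has derivative
`(ad (P t)) ((S t) x) - (S t) ((ad (P t)) x)` at `t`. -/
theorem stmt_15 (A : Type*) [NormedRing A] [NormedAlgebra ℝ A] [CompleteSpace A]
    (P : ℝ → A) (g : ℝ → Aˣ)
    (hg : ∀ t : ℝ, HasDerivAt (fun s => ((g s : A))) (P t * (g t : A)) t)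
    (S₀ : A →L[ℝ] A) :
    (∀ (t : ℝ) (x : A),
      ((conjOp (g t)).comp (S₀.comp (conjOp ((g t)⁻¹)))) x =
        (g t : A) * S₀ (((g t)⁻¹ : Aˣ) * x * (g t : A)) * ((g t)⁻¹ : Aˣ)) ∧
    (∀ (x : A) (t : ℝ),
      HasDerivAt (fun s => ((conjOp (g s)).comp (S₀.comp (conjOp ((g s)⁻¹)))) x)
        ((adOp (P t)) (((conjOp (g t)).comp (S₀.comp (conjOp ((g t)⁻¹)))) x) -
          ((conjOp (g t)).comp (S₀.comp (conjOp ((g t)⁻¹)))) ((adOp (P t)) x)) t) := by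
  have key : ∀ (t : ℝ) (x : A),
      ((conjOp (g t)).comp (S₀.comp (conjOp ((g t)⁻¹)))) x =
        (g t : A) * S₀ (((g t)⁻¹ : Aˣ) * x * (g t : A)) * ((g t)⁻¹ : Aˣ) := by
    intro t x
    simp [conjOp, mul_assoc]
  refine ⟨key, ?_⟩
  intro x t
  have hinv : ∀ t : ℝ, HasDerivAt (fun s => (((g s)⁻¹ : Aˣ) : A))
      (-(((g t)⁻¹ : Aˣ) * P t)) t := by
    intro t
    have h1 := (hasFDerivAt_ringInverse (𝕜 := ℝ) (g t)).comp_hasDerivAt t (hg t)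
    have h2 : (fun s => Ring.inverse ((g s : A))) = fun s => (((g s)⁻¹ : Aˣ) : A) := by
      funext s; simp
    simp only [Function.comp_def] at h1
    rw [h2] at h1
    convert h1 using 1
    · rfl
    simp [ContinuousLinearMap.mulLeftRight_apply, mul_assoc]
  have hmid : HasDerivAt (fun s => S₀ (((g s)⁻¹ : Aˣ) * x * (g s : A)))
      (S₀ (-(((g t)⁻¹ : Aˣ) * P t) * x * (g t : A) +
        ((g t)⁻¹ : Aˣ) * x * (P t * (g t : A)))) t := by
    exact S₀.hasFDerivAt.comp_hasDerivAt t
      (((hinv t).mul_const x).mul (hg t))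
  have hall : HasDerivAt
      (fun s => (g s : A) * S₀ (((g s)⁻¹ : Aˣ) * x * (g s : A)) * ((g s)⁻¹ : Aˣ))
      ((P t * (g t : A)) * S₀ (((g t)⁻¹ : Aˣ) * x * (g t : A)) * ((g t)⁻¹ : Aˣ) +
        (g t : A) * S₀ (-(((g t)⁻¹ : Aˣ) * P t) * x * (g t : A) +
          ((g t)⁻¹ : Aˣ) * x * (P t * (g t : A))) * ((g t)⁻¹ : Aˣ) +
        (g t : A) * S₀ (((g t)⁻¹ : Aˣ) * x * (g t : A)) * (-(((g t)⁻¹ : Aˣ) * P t))) t := by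
    have := ((hg t).mul hmid).mul (hinv t)
    convert this using 1
    · rfl
    simp only [Pi.mul_apply]
    noncomm_ring
  have hfun : (fun s => ((conjOp (g s)).comp (S₀.comp (conjOp ((g s)⁻¹)))) x) =
      fun s => (g s : A) * S₀ (((g s)⁻¹ : Aˣ) * x * (g s : A)) * ((g s)⁻¹ : Aˣ) := by
    funext s; exact key s x
  rw [hfun, key t, key t]
  convert hall using 1
  simp only [adOp, ContinuousLinearMap.sub_apply, ContinuousLinearMap.mul_apply',
    ContinuousLinearMap.flip_apply]
  have e1 : S₀ (-(((g t)⁻¹ : Aˣ) * P t) * x * (g t : A) +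
      ((g t)⁻¹ : Aˣ) * x * (P t * (g t : A))) =
      -S₀ (((g t)⁻¹ : Aˣ) * (P t * x) * (g t : A)) +
      S₀ (((g t)⁻¹ : Aˣ) * (x * P t) * (g t : A)) := by
    rw [← map_neg, ← map_add]
    congr 1
    noncomm_ring
  rw [e1]
  have e2 : ((g t)⁻¹ : Aˣ) * (P t * x - x * P t) * (g t : A) =
      ((g t)⁻¹ : Aˣ) * (P t * x) * (g t : A) - ((g t)⁻¹ : Aˣ) * (x * P t) * (g t : A) := by
    noncomm_ring
  rw [e2, map_sub]
  noncomm_ring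
end

section
/- Let A be a complete normed ℝ-algebra (associative, unital) and P : ℝ → A continuous. Define a : ℕ → ℝ → A by a 0 t = 1 and a (n+1) t = ∫_0^t P s * a n s ds, and set U t := ∑'_{n} a n t (the sum of the summable family). Then U 0 = 1 and for every t ≥ 0, U has derivative P t * U t at t within [0, ∞) (HasDerivWithinAt U (P t * U t) (Set.Ici 0) t); that is, the time-ordered exponential series solves ∂_t U = P U, U(0) = 1. -/
/-- The time-ordered iterated integrals of a path `P` in a Banach algebra:
`a 0 t = 1` and `a (n+1) t = ∫ s in 0..t, P s * a n s`. -/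
noncomputable def timeOrderedIter {A : Type*} [NormedRing A] [NormedAlgebra ℝ A]
    (P : ℝ → A) : ℕ → ℝ → A
  | 0, _ => 1
  | n + 1, t => ∫ s in (0 : ℝ)..t, P s * timeOrderedIter P n s

section TimeOrderedAux

variable {A : Type*} [NormedRing A] [NormedAlgebra ℝ A] [CompleteSpace A]
  {P : ℝ → A}

lemma toi_cont (hP : Continuous P) (n : ℕ) : Continuous (timeOrderedIter P n) := by
  induction n with
  | zero => exact continuous_const
  | succ n ih =>
    exact intervalIntegral.continuous_primitive
      (fun a b => ((hP.mul ih)).intervalIntegrable a b) 0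

lemma toi_deriv (hP : Continuous P) (n : ℕ) (t : ℝ) :
    HasDerivAt (timeOrderedIter P (n + 1)) (P t * timeOrderedIter P n t) t :=
  ((hP.mul (toi_cont hP n)).integral_hasStrictDerivAt 0 t).hasDerivAt

lemma toi_bound (hP : Continuous P) {C T : ℝ} (hC0 : 0 ≤ C)
    (hC : ∀ s : ℝ, |s| ≤ T → ‖P s‖ ≤ C) :
    ∀ n : ℕ, ∀ t : ℝ, |t| ≤ T →
      ‖timeOrderedIter P n t‖ ≤ ‖(1 : A)‖ * C ^ n * |t| ^ n / n.factorial := by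
  intro n
  induction n with
  | zero => intro t _; simp [timeOrderedIter]
  | succ n ih =>
    intro t ht
    have habs : ∀ s : ℝ, s ∈ Set.uIcc 0 t → |s| ≤ T := by
      intro s hs
      refine le_trans ?_ ht
      rcases Set.mem_uIcc.1 hs with h | h
      · rw [abs_of_nonneg h.1]
        exact le_trans h.2 (le_abs_self t)
      · rw [abs_of_nonpos h.2]
        exact le_trans (neg_le_neg h.1) (neg_le_abs t)
    have key : ∀ s : ℝ, s ∈ Set.uIcc 0 t →
        ‖P s * timeOrderedIter P n s‖ ≤ ‖(1:A)‖ * C ^ (n+1) * |s| ^ n / n.factorial := by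
      intro s hs
      calc ‖P s * timeOrderedIter P n s‖ ≤ ‖P s‖ * ‖timeOrderedIter P n s‖ := norm_mul_le _ _
        _ ≤ C * (‖(1:A)‖ * C ^ n * |s| ^ n / n.factorial) := by
            apply mul_le_mul (hC s (habs s hs)) (ih s (habs s hs)) (norm_nonneg _)
              hC0
        _ = ‖(1:A)‖ * C ^ (n+1) * |s| ^ n / n.factorial := by ring
    have hint : IntervalIntegrable (fun s => ‖P s * timeOrderedIter P n s‖)
        MeasureTheory.volume 0 t := ((hP.mul (toi_cont hP n)).norm).intervalIntegrable 0 t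
    have h1 : (n.factorial : ℝ) ≠ 0 := Nat.cast_ne_zero.2 n.factorial_ne_zero
    have h2 : ((n : ℝ) + 1) ≠ 0 := by positivity
    have hrhs : (‖(1:A)‖ * C ^ (n+1) / n.factorial) * (|t| ^ (n+1) / (n+1))
        = ‖(1:A)‖ * C ^ (n+1) * |t| ^ (n+1) / (n+1).factorial := by
      rw [Nat.factorial_succ]
      push_cast
      rw [div_mul_div_comm]
      ring
    calc ‖timeOrderedIter P (n+1) t‖
        ≤ |∫ s in (0:ℝ)..t, ‖P s * timeOrderedIter P n s‖| :=
          intervalIntegral.norm_integral_le_abs_integral_norm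
      _ ≤ ‖(1:A)‖ * C ^ (n+1) * |t| ^ (n+1) / (n+1).factorial := by
          rcases le_or_gt 0 t with h0 | h0
          · rw [abs_of_nonneg (intervalIntegral.integral_nonneg h0
              (fun s _ => norm_nonneg _))]
            have := intervalIntegral.integral_mono_on (g := fun s : ℝ => ‖(1:A)‖ * C ^ (n+1) * s ^ n / n.factorial) h0 hint
              (((continuous_const.mul (continuous_pow n)).div_const _).intervalIntegrable 0 t)
              (fun s hs => by
                have hk := key s (by rw [Set.uIcc_of_le h0]; exact hs)
                rwa [abs_of_nonneg hs.1] at hk)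
            refine le_trans this ?_
            rw [← hrhs]
            have : (∫ s in (0:ℝ)..t, ‖(1:A)‖ * C ^ (n+1) * s ^ n / n.factorial)
                = (‖(1:A)‖ * C ^ (n+1) / n.factorial) * (t ^ (n+1) / (n+1)) := by
              have : (fun s : ℝ => ‖(1:A)‖ * C ^ (n+1) * s ^ n / n.factorial)
                  = fun s : ℝ => (‖(1:A)‖ * C ^ (n+1) / n.factorial) * s ^ n := by
                funext s; ring
              rw [this, intervalIntegral.integral_const_mul, integral_pow]
              push_cast; ring
            rw [this, abs_of_nonneg h0]
          · rw [intervalIntegral.integral_symm t 0, abs_neg,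
              abs_of_nonneg (intervalIntegral.integral_nonneg h0.le
                (fun s _ => norm_nonneg _)), ← hrhs, abs_of_neg h0]
            have hint' : IntervalIntegrable (fun s => ‖P s * timeOrderedIter P n s‖)
                MeasureTheory.volume t 0 := ((hP.mul (toi_cont hP n)).norm).intervalIntegrable t 0
            have hmono := intervalIntegral.integral_mono_on (g := fun s : ℝ => ‖(1:A)‖ * C ^ (n+1) * (-s) ^ n / n.factorial) h0.le hint'
              (((continuous_const.mul (continuous_neg.pow n)).div_const
                  (n.factorial : ℝ)).intervalIntegrable t 0)
              (fun s hs => by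
                have hk := key s (by rw [Set.uIcc_of_ge h0.le]; exact hs)
                rwa [abs_of_nonpos hs.2] at hk)
            refine le_trans hmono (le_of_eq ?_)
            have heq : (fun s : ℝ => ‖(1:A)‖ * C ^ (n+1) * (-s) ^ n / n.factorial)
                = fun s : ℝ => (fun u : ℝ => (‖(1:A)‖ * C ^ (n+1) / n.factorial) * u ^ n) (-s) := by
              funext s; ring
            rw [heq, intervalIntegral.integral_comp_neg
              (fun u : ℝ => (‖(1:A)‖ * C ^ (n+1) / n.factorial) * u ^ n)]
            rw [neg_zero, intervalIntegral.integral_const_mul, integral_pow]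
            ring

end TimeOrderedAux

/-- For continuous `P`, the time-ordered exponential `U t = ∑' n, a n t` satisfies
`U 0 = 1` and solves `∂ₜ U = P U` on `[0, ∞)`: for every `t ≥ 0`, `U` has derivative
`P t * U t` at `t` within `Set.Ici 0`. -/
theorem stmt_17 (A : Type*) [NormedRing A] [NormedAlgebra ℝ A] [CompleteSpace A]
    (P : ℝ → A) (hP : Continuous P) :
    (∑' n : ℕ, timeOrderedIter P n 0) = 1 ∧
    ∀ t : ℝ, 0 ≤ t →
      HasDerivWithinAt (fun u : ℝ => ∑' n : ℕ, timeOrderedIter P n u)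
        (P t * ∑' n : ℕ, timeOrderedIter P n t) (Set.Ici (0 : ℝ)) t := by
  constructor
  · rw [tsum_eq_single 0]
    · rfl
    · intro n hn
      cases n with
      | zero => exact absurd rfl hn
      | succ m => simp [timeOrderedIter]
  · intro t ht
    set T : ℝ := t + 1 with hT
    have hTpos : 0 < T := by linarith
    obtain ⟨C0, hC0⟩ := (isCompact_Icc : IsCompact (Set.Icc (-T) T)).exists_bound_of_continuousOn
      hP.continuousOn
    set C : ℝ := max C0 0 with hCdef
    have hCnn : 0 ≤ C := le_max_right _ _
    have hC : ∀ s : ℝ, |s| ≤ T → ‖P s‖ ≤ C := fun s hs =>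
      le_trans (hC0 s ⟨(abs_le.1 hs).1, (abs_le.1 hs).2⟩) (le_max_left _ _)
    have hbd := toi_bound hP hCnn hC
    have hb2 : ∀ y : ℝ, |y| ≤ T → ∀ n : ℕ,
        ‖timeOrderedIter P n y‖ ≤ ‖(1:A)‖ * (C*T)^n / n.factorial := by
      intro y hy n
      refine le_trans (hbd n y hy) ?_
      rw [mul_pow, ← mul_assoc]
      gcongr
    have hts : t ∈ Set.Ioo (-T) T := ⟨by linarith, by linarith⟩
    have h0s : (0:ℝ) ∈ Set.Ioo (-T) T := ⟨by linarith, hTpos⟩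
    have hsum : ∀ y ∈ Set.Ioo (-T) T, Summable fun n => timeOrderedIter P n y := by
      intro y hy
      have hyT : |y| ≤ T := le_of_lt (abs_lt.2 ⟨hy.1, hy.2⟩)
      refine Summable.of_norm (Summable.of_nonneg_of_le (fun n => norm_nonneg _)
        (fun n => hb2 y hyT n) ?_)
      simp_rw [mul_div_assoc]
      exact (Real.summable_pow_div_factorial (C*T)).mul_left _
    have hder := hasDerivAt_tsum_of_isPreconnected
      (u := fun n : ℕ => C * ‖(1:A)‖ * (C*T)^n / n.factorial)
      (g := fun (n : ℕ) (y : ℝ) => timeOrderedIter P (n+1) y)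
      (g' := fun (n : ℕ) (y : ℝ) => P y * timeOrderedIter P n y)
      (by simp_rw [mul_div_assoc]
          exact (Real.summable_pow_div_factorial (C*T)).mul_left _)
      isOpen_Ioo isPreconnected_Ioo
      (fun n y _ => toi_deriv hP n y)
      (fun n y hy => by
        have hyT : |y| ≤ T := le_of_lt (abs_lt.2 ⟨hy.1, hy.2⟩)
        calc ‖P y * timeOrderedIter P n y‖ ≤ ‖P y‖ * ‖timeOrderedIter P n y‖ := norm_mul_le _ _
          _ ≤ C * (‖(1:A)‖ * (C*T)^n / n.factorial) :=
              mul_le_mul (hC y hyT) (hb2 y hyT n) (norm_nonneg _) hCnn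
          _ = C * ‖(1:A)‖ * (C*T)^n / n.factorial := by ring)
      h0s
      (by
        have : (fun n : ℕ => timeOrderedIter P (n+1) 0) = fun _ => (0:A) := by
          funext n; simp [timeOrderedIter]
        rw [this]; exact summable_zero)
      hts
    have hU : ∀ y ∈ Set.Ioo (-T) T,
        (∑' n : ℕ, timeOrderedIter P n y) = 1 + ∑' n : ℕ, timeOrderedIter P (n+1) y := by
      intro y hy
      rw [Summable.tsum_eq_zero_add (hsum y hy)]
      simp [timeOrderedIter]
    have hDA : HasDerivAt (fun y : ℝ => ∑' n : ℕ, timeOrderedIter P n y)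
        (∑' n : ℕ, P t * timeOrderedIter P n t) t := by
      refine HasDerivAt.congr_of_eventuallyEq (hder.const_add 1) ?_
      filter_upwards [Ioo_mem_nhds hts.1 hts.2] with y hy using hU y hy
    have hmul : (∑' n : ℕ, P t * timeOrderedIter P n t)
        = P t * ∑' n : ℕ, timeOrderedIter P n t := (hsum t hts).tsum_mul_left _
    rw [← hmul]
    exact hDA.hasDerivWithinAt
end
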